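/- There exist points a, b, x_1, …, x_5 in ℝ³ such that ‖a − x_i‖ = 1 and ‖b − x_i‖ = 1 for all i, ‖a − b‖ > 1, and ‖x_i − x_j‖ > 1 for all i ≠ j. Equivalently, the complete bipartite graph K_{2,5} is a marble graph. -/

import Mathlib

noncomputable def hh : ℝ := Real.sqrt (651/2500)

theorem hh_sq : hh ^ 2 = 651/2500 := by
  rw [hh, Real.sq_sqrt]; norm_num

/-- `K_{2,5}` is a marble graph: there exist points `a, b ∈ ℝ³` with `‖a - b‖ > 1`
together with 5 points `x i` at distance exactly 1 from both `a` and `b` that are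
pairwise at distance greater than 1. -/
theorem k_two_five_marble_graph :
    ∃ (a b : EuclideanSpace ℝ (Fin 3)) (x : Fin 5 → EuclideanSpace ℝ (Fin 3)),
      (∀ i, ‖a - x i‖ = 1) ∧ (∀ i, ‖b - x i‖ = 1) ∧ 1 < ‖a - b‖ ∧
      (∀ i j, i ≠ j → 1 < ‖x i - x j‖) := by
  have hsub : ∀ (f g : EuclideanSpace ℝ (Fin 3)) (i : Fin 3), (f - g) i = f i - g i :=
    fun _ _ _ => rfl
  refine ⟨!₂[0, 0, hh], !₂[0, 0, -hh],
    ![!₂[43/50, 0, 0],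
      !₂[200853/766450, 12556/15329, 0],
      !₂[-57018/81925, 3311/6554, 0],
      !₂[-57018/81925, -3311/6554, 0],
      !₂[200853/766450, -12556/15329, 0]], ?_, ?_, ?_, ?_⟩
  · intro i
    fin_cases i <;>
    · rw [EuclideanSpace.norm_eq, Fin.sum_univ_three]
      simp [hsub]
      nlinarith [hh_sq]
  · intro i
    fin_cases i <;>
    · rw [EuclideanSpace.norm_eq, Fin.sum_univ_three]
      simp [hsub]
      nlinarith [hh_sq]
  · rw [EuclideanSpace.norm_eq, Fin.sum_univ_three]
    simp [hsub]
    rw [Real.lt_sqrt (by positivity)]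
    nlinarith [hh_sq]
  · intro i j hij
    fin_cases i <;> fin_cases j <;> first
      | exact absurd rfl hij
      | · rw [EuclideanSpace.norm_eq, Fin.sum_univ_three]
          simp [hsub]
          rw [Real.lt_sqrt (by positivity)]
          norm_num
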